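/- Let n and k be positive integers, and let u and v be distinct vertices of the Kneser graph K(2n+k,n). If |u ∩ v| < (⌈(n-1)/(2k)⌉ - 1)·k + 1, then dist(u,v) is odd. -/

import Mathlib

/-- The Kneser graph `K(m, n)`: vertices are the `n`-element subsets of an `m`-element
ground set, with edges between disjoint sets. -/
def KneserGraph (m n : ℕ) : SimpleGraph {s : Finset (Fin m) // s.card = n} where
  Adj u v := Disjoint u.1 v.1 ∧ u ≠ v
  symm := ⟨fun u v ⟨h, hne⟩ => ⟨h.symm, hne.symm⟩⟩
  loopless := ⟨fun u ⟨_, h⟩ => h rfl⟩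

/-- The geodetic interval `I[u,v]`: all vertices lying on some shortest `u,v`-path. -/
def geodInterval {V : Type*} (G : SimpleGraph V) (u v : V) : Set V :=
  {w | G.dist u w + G.dist w v = G.dist u v}

/-- `I[W] = ⋃_{u,v ∈ W} I[u,v]`. -/
def geodIntervalSet {V : Type*} (G : SimpleGraph V) (W : Set V) : Set V :=
  ⋃ (u ∈ W) (v ∈ W), geodInterval G u v

/-- `W` is a geodetic set if `I[W] = V(G)`. -/
def IsGeodeticSet {V : Type*} (G : SimpleGraph V) (W : Set V) : Prop :=
  geodIntervalSet G W = Set.univ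

/-- `W` is geodetically convex if `I[W] = W`. -/
def IsGConvex {V : Type*} (G : SimpleGraph V) (W : Set V) : Prop :=
  geodIntervalSet G W = W

/-- The geodetic hull `H[W]`: the smallest g-convex set containing `W`. -/
def geodHull {V : Type*} (G : SimpleGraph V) (W : Set V) : Set V :=
  ⋂₀ {C | IsGConvex G C ∧ W ⊆ C}

/-- `W` is a geodetic hull set if `H[W] = V(G)`. -/
def IsGeodHullSet {V : Type*} (G : SimpleGraph V) (W : Set V) : Prop :=
  geodHull G W = Set.univ

/-- The geodetic number: minimum cardinality of a geodetic set. -/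
noncomputable def geodeticNumber {V : Type*} (G : SimpleGraph V) : ℕ :=
  sInf {m | ∃ W : Set V, IsGeodeticSet G W ∧ W.ncard = m}

/-- The geodetic hull number: minimum cardinality of a geodetic hull set. -/
noncomputable def geodHullNumber {V : Type*} (G : SimpleGraph V) : ℕ :=
  sInf {m | ∃ W : Set V, IsGeodHullSet G W ∧ W.ncard = m}

/-- The function `H(n,k)` from the paper. -/
def Hfun (n k : ℕ) : ℕ := if n % k ≤ 1 then n % k + k - 2 else n % k - 2

/-- `p = (⌈(n-1)/(2k)⌉ - 1)·k + 1`, computed in `ℤ`. -/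
def pInt (n k : ℕ) : ℤ := (⌈((n : ℚ) - 1) / (2 * k)⌉ - 1) * k + 1

namespace KneserAux

variable {n k : ℕ}

lemma ne_of_disjoint (hn : 0 < n) (u w : {s : Finset (Fin (2*n+k)) // s.card = n})
    (hd : Disjoint u.1 w.1) : u ≠ w := by
  rintro rfl
  rw [disjoint_self] at hd
  have := u.2
  rw [hd] at this
  simp at this
  omega

lemma compl_card (u : {s : Finset (Fin (2*n+k)) // s.card = n}) :
    (u.1ᶜ).card = n + k := by
  rw [Finset.card_compl, Fintype.card_fin, u.2]; omega

lemma walk_bound (u v : {s : Finset (Fin (2*n+k)) // s.card = n})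
    (p : (KneserGraph (2*n+k) n).Walk u v) :
    (Even p.length → n ≤ (u.1 ∩ v.1).card + (p.length/2)*k) ∧
    (¬ Even p.length → (u.1 ∩ v.1).card ≤ (p.length/2)*k) := by
  induction p with
  | @nil w =>
    refine ⟨fun _ => ?_, fun h => absurd Even.zero h⟩
    simp [Finset.inter_self, w.2]
  | @cons u b v h p ih =>
    have hd : Disjoint u.1 b.1 := h.1
    have hbc : (b.1ᶜ).card = n + k := compl_card b
    have hsub : u.1 ∪ (v.1 \ b.1) ⊆ b.1ᶜ := by
      apply Finset.union_subset
      · exact fun x hx => Finset.mem_compl.mpr (Finset.disjoint_left.mp hd hx)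
      · exact fun x hx => Finset.mem_compl.mpr (Finset.mem_sdiff.mp hx).2
    have c4 : (u.1 ∪ (v.1 \ b.1)).card ≤ n + k := hbc ▸ Finset.card_le_card hsub
    have c1 : (u.1 ∪ (v.1 \ b.1)).card + (u.1 ∩ (v.1 \ b.1)).card
        = u.1.card + (v.1 \ b.1).card := Finset.card_union_add_card_inter _ _
    have c2 : (v.1 \ b.1).card + (v.1 ∩ b.1).card = v.1.card :=
      Finset.card_sdiff_add_card_inter _ _
    have c3 : (u.1 ∩ (v.1 \ b.1)).card ≤ (u.1 ∩ v.1).card :=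
      Finset.card_le_card (Finset.inter_subset_inter (le_refl _) Finset.sdiff_subset)
    have c5 : (u.1 ∩ v.1).card ≤ (v.1 \ b.1).card := by
      apply Finset.card_le_card
      intro x hx
      rw [Finset.mem_inter] at hx
      rw [Finset.mem_sdiff]
      exact ⟨hx.2, fun hxb => Finset.disjoint_left.mp hd hx.1 hxb⟩
    have hcomm : v.1 ∩ b.1 = b.1 ∩ v.1 := Finset.inter_comm _ _
    have hu : u.1.card = n := u.2
    have hv : v.1.card = n := v.2
    rw [SimpleGraph.Walk.length_cons]
    constructor
    · intro hev
      have hodd : ¬ Even p.length := by simpa [Nat.even_add_one] using hev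
      obtain ⟨r, hr⟩ := Nat.not_even_iff_odd.mp hodd
      have ih2 : (b.1 ∩ v.1).card ≤ (p.length/2)*k := ih.2 hodd
      have hdiv : p.length / 2 = r := by omega
      have hdiv2 : (p.length + 1) / 2 = r + 1 := by omega
      rw [hdiv] at ih2
      rw [hdiv2, add_mul, one_mul]
      rw [hcomm] at c2
      generalize r * k = R at ih2 ⊢
      omega
    · intro hodd
      have hev : Even p.length := by simpa [Nat.even_add_one] using hodd
      obtain ⟨r, hr⟩ := id hev
      have ih1 : n ≤ (b.1 ∩ v.1).card + (p.length/2)*k := ih.1 hev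
      have hdiv : p.length / 2 = r := by omega
      have hdiv2 : (p.length + 1) / 2 = r := by omega
      rw [hdiv] at ih1
      rw [hdiv2]
      rw [hcomm] at c2
      generalize r * k = R at ih1 ⊢
      omega


lemma exists_walk (hn : 0 < n) (hk : 0 < k) :
    ∀ t : ℕ, ∀ u v : {s : Finset (Fin (2*n+k)) // s.card = n},
      (u.1 ∩ v.1).card ≤ t*k →
      ∃ p : (KneserGraph (2*n+k) n).Walk u v, p.length ≤ 2*t+1 := by
  intro t
  induction t with
  | zero =>
    intro u v hs
    simp only [Nat.zero_mul, Nat.le_zero] at hs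
    have hd : Disjoint u.1 v.1 := by
      rw [Finset.disjoint_iff_inter_eq_empty, ← Finset.card_eq_zero]; exact hs
    exact ⟨SimpleGraph.Walk.cons (⟨hd, ne_of_disjoint hn u v hd⟩ : (KneserGraph (2*n+k) n).Adj u v) SimpleGraph.Walk.nil, by show 0 + 1 ≤ 0 * 2 + 1; omega⟩
  | succ t ih =>
    intro u v hs
    by_cases hle : (u.1 ∩ v.1).card ≤ t*k
    · obtain ⟨p, hp⟩ := ih u v hle
      exact ⟨p, by omega⟩
    push_neg at hle
    -- construct a : disjoint from u, containing v \ u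
    have hcu : (u.1ᶜ).card = n + k := compl_card u
    have hsub1 : v.1 \ u.1 ⊆ u.1ᶜ := fun x hx =>
      Finset.mem_compl.mpr (Finset.mem_sdiff.mp hx).2
    have hc1 : (v.1 \ u.1).card ≤ n := le_trans (Finset.card_le_card Finset.sdiff_subset) (le_of_eq v.2)
    obtain ⟨a, hva, hau, hacard⟩ :=
      Finset.exists_subsuperset_card_eq hsub1 hc1 (by rw [hcu]; omega)
    set A : {s : Finset (Fin (2*n+k)) // s.card = n} := ⟨a, hacard⟩ with hA
    have hdua : Disjoint u.1 a := Finset.disjoint_left.mpr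
      (fun x hxu hxa => Finset.mem_compl.mp (hau hxa) hxu)
    have hadjuA : (KneserGraph (2*n+k) n).Adj u A := ⟨hdua, ne_of_disjoint hn u A hdua⟩
    have hca : (aᶜ).card = n + k := compl_card A
    -- card facts
    have hav : a ∩ v.1 = v.1 \ u.1 := by
      apply Finset.Subset.antisymm
      · intro x hx
        rw [Finset.mem_inter] at hx
        exact Finset.mem_sdiff.mpr ⟨hx.2, Finset.mem_compl.mp (hau hx.1)⟩
      · exact Finset.subset_inter hva Finset.sdiff_subset
    have e1 : (v.1 \ u.1).card + (v.1 ∩ u.1).card = v.1.card :=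
      Finset.card_sdiff_add_card_inter _ _
    have e2 : (aᶜ \ v.1).card + (aᶜ ∩ v.1).card = aᶜ.card :=
      Finset.card_sdiff_add_card_inter _ _
    have hcompl_inter : aᶜ ∩ v.1 = v.1 \ a := by
      ext x; simp [Finset.mem_sdiff, Finset.mem_compl, and_comm]
    have e3 : (v.1 \ a).card + (v.1 ∩ a).card = v.1.card :=
      Finset.card_sdiff_add_card_inter _ _
    have hcm1 : v.1 ∩ u.1 = u.1 ∩ v.1 := Finset.inter_comm _ _
    have hcm2 : v.1 ∩ a = a ∩ v.1 := Finset.inter_comm _ _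
    have hvn : v.1.card = n := v.2
    have hsn : (u.1 ∩ v.1).card ≤ n := le_trans (Finset.card_le_card Finset.inter_subset_right) (le_of_eq v.2)
    -- (aᶜ ∩ v).card = s
    have hs2 : (aᶜ ∩ v.1).card = (u.1 ∩ v.1).card := by
      rw [hcompl_inter]
      rw [hcm1] at e1; rw [hcm2, hav] at e3
      omega
    by_cases hks : (u.1 ∩ v.1).card ≤ k
    · -- walk of length 3
      have hsz : n ≤ (aᶜ \ v.1).card := by rw [hca] at e2; omega
      obtain ⟨b, hb, hbcard⟩ := Finset.exists_subset_card_eq hsz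
      set B : {s : Finset (Fin (2*n+k)) // s.card = n} := ⟨b, hbcard⟩ with hB
      have hdab : Disjoint a b := Finset.disjoint_left.mpr
        (fun x hxa hxb => Finset.mem_compl.mp (Finset.mem_sdiff.mp (hb hxb)).1 hxa)
      have hdbv : Disjoint b v.1 := Finset.disjoint_left.mpr
        (fun x hxb hxv => (Finset.mem_sdiff.mp (hb hxb)).2 hxv)
      refine ⟨SimpleGraph.Walk.cons hadjuA (SimpleGraph.Walk.cons
        (⟨hdab, ne_of_disjoint hn A B hdab⟩ : (KneserGraph (2*n+k) n).Adj A B) (SimpleGraph.Walk.cons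
        (⟨hdbv, ne_of_disjoint hn B v hdbv⟩ : (KneserGraph (2*n+k) n).Adj B v) SimpleGraph.Walk.nil)), by show 0 + 1 + 1 + 1 ≤ 2 * (t + 1) + 1; omega⟩
    · push_neg at hks
      have hsz1 : (aᶜ \ v.1).card ≤ n := by rw [hca] at e2; omega
      obtain ⟨b, h1b, h2b, hbcard⟩ :=
        Finset.exists_subsuperset_card_eq (Finset.sdiff_subset (s := aᶜ) (t := v.1)) hsz1
          (by rw [hca]; omega)
      set B : {s : Finset (Fin (2*n+k)) // s.card = n} := ⟨b, hbcard⟩ with hB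
      have hdab : Disjoint a b := Finset.disjoint_left.mpr
        (fun x hxa hxb => Finset.mem_compl.mp (h2b hxb) hxa)
      -- b \ v = aᶜ \ v
      have hbv : b \ v.1 = aᶜ \ v.1 := by
        apply Finset.Subset.antisymm
        · intro x hx
          rw [Finset.mem_sdiff] at hx ⊢
          exact ⟨h2b hx.1, hx.2⟩
        · intro x hx
          rw [Finset.mem_sdiff] at hx ⊢
          exact ⟨h1b (Finset.mem_sdiff.mpr hx), hx.2⟩
      have e4 : (b \ v.1).card + (b ∩ v.1).card = b.card :=
        Finset.card_sdiff_add_card_inter _ _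
      have hbvcard : (b ∩ v.1).card + k = (u.1 ∩ v.1).card := by
        rw [hbv] at e4; rw [hca] at e2; omega
      have hble : (b ∩ v.1).card ≤ t*k := by
        have hs' : (u.1 ∩ v.1).card ≤ t*k + k := by rw [add_mul, one_mul] at hs; exact hs
        have : (b ∩ v.1).card + k ≤ t*k + k := hbvcard ▸ hs'
        exact Nat.le_of_add_le_add_right this
      obtain ⟨q, hq⟩ := ih B v hble
      refine ⟨SimpleGraph.Walk.cons hadjuA (SimpleGraph.Walk.cons
        (⟨hdab, ne_of_disjoint hn A B hdab⟩ : (KneserGraph (2*n+k) n).Adj A B) q), ?_⟩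
      simp only [SimpleGraph.Walk.length_cons]
      show q.length + 1 + 1 ≤ 2 * (t + 1) + 1
      omega

end KneserAux

theorem odd_dist_of_small_intersection
    (n k : ℕ) (hn : 0 < n) (hk : 0 < k)
    (u v : {s : Finset (Fin (2 * n + k)) // s.card = n}) (huv : u ≠ v)
    (h : ((u.1 ∩ v.1).card : ℤ) < pInt n k) :
    Odd ((KneserGraph (2 * n + k) n).dist u v) := by
  unfold pInt at h
  set c : ℤ := ⌈((n : ℚ) - 1) / (2 * k)⌉ with hc
  have hs1 : ((u.1 ∩ v.1).card : ℤ) ≤ (c - 1) * k := by omega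
  have hc1 : 1 ≤ c := by
    by_contra hcon
    push_neg at hcon
    have hneg : (c - 1) * (k : ℤ) < 0 :=
      mul_neg_of_neg_of_pos (by omega) (by exact_mod_cast hk)
    have : (0 : ℤ) ≤ ((u.1 ∩ v.1).card : ℤ) := Int.natCast_nonneg _
    omega
  set t : ℕ := (c - 1).toNat with ht
  have htc : (t : ℤ) = c - 1 := Int.toNat_of_nonneg (by omega)
  have hst : (u.1 ∩ v.1).card ≤ t * k := by
    have : ((u.1 ∩ v.1).card : ℤ) ≤ (t : ℤ) * k := by rw [htc]; exact hs1
    exact_mod_cast this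
  have h2tk : 2 * t * k + 1 < n := by
    have hkq : (0 : ℚ) < 2 * k := by positivity
    have hceil : (c : ℚ) < ((n : ℚ) - 1) / (2 * k) + 1 := by
      rw [hc]; exact_mod_cast Int.ceil_lt_add_one _
    have h1 : ((c : ℚ) - 1) * (2 * k) < (n : ℚ) - 1 :=
      (lt_div_iff₀ hkq).mp (by linarith)
    have h2 : ((2 * t * k : ℕ) : ℚ) + 1 < (n : ℚ) := by
      push_cast
      have : ((t : ℚ)) = (c : ℚ) - 1 := by exact_mod_cast htc
      rw [this]; linarith
    exact_mod_cast h2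
  obtain ⟨p, hp⟩ := KneserAux.exists_walk hn hk t u v hst
  have hdle : (KneserGraph (2*n+k) n).dist u v ≤ 2*t+1 :=
    le_trans (SimpleGraph.dist_le p) hp
  obtain ⟨q, hq⟩ := SimpleGraph.Reachable.exists_walk_length_eq_dist ⟨p⟩
  rw [← Nat.not_even_iff_odd]
  intro hev
  have hqev : Even q.length := by rw [hq]; exact hev
  have hbound := (KneserAux.walk_bound u v q).1 hqev
  have h1 : q.length / 2 ≤ t := by
    rw [Nat.even_iff] at hqev
    rw [hq] at hqev ⊢
    omega
  have h2 : n ≤ (u.1 ∩ v.1).card + t * k :=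
    le_trans hbound (Nat.add_le_add_left (Nat.mul_le_mul h1 (le_refl k)) _)
  have h3 : n ≤ 2 * t * k := by
    calc n ≤ t * k + t * k := le_trans h2 (Nat.add_le_add_right hst _)
    _ = 2 * t * k := by ring
  exact absurd (h3.trans_lt (by omega)) (lt_irrefl n)
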